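/- arXiv:2604.02659 — 3 statements merged into one kernel-verified Lean document; each statement's English description precedes it below -/
import Mathlib

section
/- For every u ∈ ℝ^C and every index i ∈ {1,…,C}, the absolute row sum of the i-th row of the softmax Jacobian satisfies Σ_{j=1}^C |σ_i(u)·δ_{ij} − σ_i(u)·σ_j(u)| ≤ 1/2. -/
/-- The softmax function on `ℝ^C`: `σ_i(u) = exp(u_i) / ∑_ℓ exp(u_ℓ)`. -/
noncomputable def softmax {C : ℕ} (u : Fin C → ℝ) : Fin C → ℝ :=
  fun i => Real.exp (u i) / ∑ ℓ, Real.exp (u ℓ)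

/-- The absolute row sum of each row of the softmax Jacobian is at most `1/2`. -/
theorem softmax_jacobian_row_sum_le_half {C : ℕ} (hC : 0 < C) (u : Fin C → ℝ) (i : Fin C) :
    ∑ j : Fin C,
        |softmax u i * (if i = j then (1 : ℝ) else 0) - softmax u i * softmax u j| ≤
      1 / 2 := by
  have : Nonempty (Fin C) := ⟨⟨0, hC⟩⟩
  have hS : (0:ℝ) < ∑ ℓ, Real.exp (u ℓ) :=
    Finset.sum_pos (fun ℓ _ => Real.exp_pos _) Finset.univ_nonempty
  have hpos : ∀ j, 0 ≤ softmax u j := fun j =>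
    div_nonneg (Real.exp_pos _).le hS.le
  have hsum : ∑ j, softmax u j = 1 := by
    unfold softmax
    rw [← Finset.sum_div, div_self hS.ne']
  have hle1 : softmax u i ≤ 1 := by
    calc softmax u i ≤ ∑ j, softmax u j :=
          Finset.single_le_sum (fun j _ => hpos j) (Finset.mem_univ i)
      _ = 1 := hsum
  have hsplit : ∑ j : Fin C,
      |softmax u i * (if i = j then (1:ℝ) else 0) - softmax u i * softmax u j|
      = softmax u i * (1 - softmax u i)
        + ∑ j ∈ Finset.univ.erase i, softmax u i * softmax u j := by
    rw [← Finset.add_sum_erase _ _ (Finset.mem_univ i)]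
    congr 1
    · rw [if_pos rfl, mul_one, ← mul_one_sub, abs_of_nonneg]
      exact mul_nonneg (hpos i) (by linarith)
    · refine Finset.sum_congr rfl (fun j hj => ?_)
      rw [if_neg (Finset.ne_of_mem_erase hj).symm, mul_zero, zero_sub, abs_neg,
        abs_of_nonneg (mul_nonneg (hpos i) (hpos j))]
  have herase : ∑ j ∈ Finset.univ.erase i, softmax u j = 1 - softmax u i := by
    have := Finset.add_sum_erase Finset.univ (softmax u) (Finset.mem_univ i)
    linarith [hsum, this]
  rw [hsplit, ← Finset.mul_sum, herase]
  nlinarith [sq_nonneg (2 * softmax u i - 1)]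
end

section
/- (Softmax perturbation under low-rank approximation.) Let W and W̃ be real C×D matrices, b ∈ ℝ^C, and h ∈ ℝ^D with Euclidean norm ‖h‖₂ ≤ R. Define the logits z = W·h + b and z̃ = W̃·h + b, and the probability vectors p = σ(z) and p̃ = σ(z̃), where σ is the softmax function. Then ‖p̃ − p‖_∞ ≤ (1/2)·R·‖W − W̃‖₂, where ‖·‖₂ on matrices denotes the spectral norm and ‖w‖_∞ = max_i |w_i|. -/
/-- The spectral norm of a real `C × D` matrix: the operator norm of the induced
linear map from `ℝ^D` with the Euclidean norm to `ℝ^C` with the Euclidean norm. -/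
noncomputable def matrixSpectralNorm {C D : ℕ} (A : Matrix (Fin C) (Fin D) ℝ) : ℝ :=
  ‖LinearMap.toContinuousLinearMap (Matrix.toEuclideanLin A)‖

lemma softmax_sum_pos {C : ℕ} (hC : 0 < C) (u : Fin C → ℝ) :
    0 < ∑ ℓ, Real.exp (u ℓ) :=
  Finset.sum_pos (fun ℓ _ => Real.exp_pos _) (by simp [Finset.univ_nonempty_iff, Fin.pos_iff_nonempty.mp hC])

lemma softmax_nonneg {C : ℕ} (hC : 0 < C) (u : Fin C → ℝ) (i : Fin C) :
    0 ≤ softmax u i :=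
  div_nonneg (Real.exp_pos _).le (softmax_sum_pos hC u).le

lemma softmax_sum_one {C : ℕ} (hC : 0 < C) (u : Fin C → ℝ) :
    ∑ ℓ, softmax u ℓ = 1 := by
  unfold softmax
  rw [← Finset.sum_div, div_self (softmax_sum_pos hC u).ne']

lemma softmax_le_one {C : ℕ} (hC : 0 < C) (u : Fin C → ℝ) (i : Fin C) :
    softmax u i ≤ 1 := by
  rw [← softmax_sum_one hC u]
  exact Finset.single_le_sum (fun ℓ _ => softmax_nonneg hC u ℓ) (Finset.mem_univ i)

lemma softmax_lipschitz {C : ℕ} (hC : 0 < C) (u v : Fin C → ℝ) (i : Fin C) :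
    |softmax u i - softmax v i| ≤ (1 / 2) * ‖u - v‖ := by
  set d : Fin C → ℝ := u - v with hd
  set w : ℝ → Fin C → ℝ := fun t => v + t • d with hw
  set g : ℝ → ℝ := fun t => softmax (w t) i with hg
  set g' : ℝ → ℝ := fun t => softmax (w t) i * (d i - ∑ ℓ, softmax (w t) ℓ * d ℓ) with hg'
  have hderiv : ∀ t : ℝ, HasDerivAt g (g' t) t := by
    intro t
    have hN : ∀ ℓ : Fin C, HasDerivAt (fun s : ℝ => Real.exp (v ℓ + s * d ℓ))
        (Real.exp (v ℓ + t * d ℓ) * d ℓ) t := by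
      intro ℓ
      have : HasDerivAt (fun s : ℝ => v ℓ + s * d ℓ) (d ℓ) t := by
        simpa using ((hasDerivAt_id t).mul_const (d ℓ)).const_add (v ℓ)
      simpa using this.exp
    have hD : HasDerivAt (fun s : ℝ => ∑ ℓ, Real.exp (v ℓ + s * d ℓ))
        (∑ ℓ, Real.exp (v ℓ + t * d ℓ) * d ℓ) t := by
      exact HasDerivAt.fun_sum (fun ℓ _ => hN ℓ)
    have hDpos : (0:ℝ) < ∑ ℓ, Real.exp (v ℓ + t * d ℓ) := by
      simpa [hw, Pi.add_apply] using softmax_sum_pos hC (w t)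
    have := (hN i).div hD hDpos.ne'
    have heq : g = fun s : ℝ => Real.exp (v i + s * d i) / ∑ ℓ, Real.exp (v ℓ + s * d ℓ) := by
      funext s; simp [hg, softmax, hw, Pi.add_apply, Pi.smul_apply, smul_eq_mul, mul_comm]
    rw [heq]
    convert this using 1
    · rfl
    · rfl
    · rfl
    have hwi : ∀ ℓ, w t ℓ = v ℓ + t * d ℓ := by intro ℓ; simp [hw, smul_eq_mul]
    simp only [hg', softmax, hwi]
    rw [show (∑ ℓ, Real.exp (v ℓ + t * d ℓ) / (∑ ℓ, Real.exp (v ℓ + t * d ℓ)) * d ℓ)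
        = (∑ ℓ, Real.exp (v ℓ + t * d ℓ) * d ℓ) / (∑ ℓ, Real.exp (v ℓ + t * d ℓ)) by
      rw [Finset.sum_div]; exact Finset.sum_congr rfl fun ℓ _ => by ring]
    field_simp
  have hbound : ∀ t ∈ Set.Ico (0:ℝ) 1, ‖g' t‖ ≤ (1 / 2) * ‖u - v‖ := by
    intro t _
    set p : Fin C → ℝ := softmax (w t) with hp
    have hp0 : ∀ ℓ, 0 ≤ p ℓ := softmax_nonneg hC _
    have hp1 : ∑ ℓ, p ℓ = 1 := softmax_sum_one hC _
    have hpi1 : p i ≤ 1 := softmax_le_one hC _ i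
    set M : ℝ := ‖u - v‖ with hM
    have hM0 : 0 ≤ M := norm_nonneg _
    have hdle : ∀ ℓ, |d ℓ| ≤ M := by
      intro ℓ
      simpa [hd, Real.norm_eq_abs] using norm_le_pi_norm (u - v) ℓ
    have key : d i - ∑ ℓ, p ℓ * d ℓ = ∑ ℓ, p ℓ * (d i - d ℓ) := by
      simp only [mul_sub, Finset.sum_sub_distrib, ← Finset.sum_mul, hp1, one_mul]
    have habs : |d i - ∑ ℓ, p ℓ * d ℓ| ≤ (1 - p i) * (2 * M) := by
      rw [key]
      calc |∑ ℓ, p ℓ * (d i - d ℓ)| ≤ ∑ ℓ, |p ℓ * (d i - d ℓ)| := Finset.abs_sum_le_sum_abs _ _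
        _ = ∑ ℓ, p ℓ * |d i - d ℓ| := by
            refine Finset.sum_congr rfl fun ℓ _ => ?_
            rw [abs_mul, abs_of_nonneg (hp0 ℓ)]
        _ = ∑ ℓ ∈ Finset.univ \ {i}, p ℓ * |d i - d ℓ| := by
            rw [← Finset.sum_subset (Finset.subset_univ _)]
            intro x _ hx
            simp only [Finset.mem_sdiff, Finset.mem_univ, true_and, Finset.mem_singleton,
              not_not] at hx
            simp [hx]
        _ ≤ ∑ ℓ ∈ Finset.univ \ {i}, p ℓ * (2 * M) := by
            refine Finset.sum_le_sum fun ℓ _ => ?_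
            refine mul_le_mul_of_nonneg_left ?_ (hp0 ℓ)
            calc |d i - d ℓ| ≤ |d i| + |d ℓ| := abs_sub _ _
              _ ≤ M + M := add_le_add (hdle i) (hdle ℓ)
              _ = 2 * M := by ring
        _ = (∑ ℓ ∈ Finset.univ \ {i}, p ℓ) * (2 * M) := by rw [Finset.sum_mul]
        _ = (1 - p i) * (2 * M) := by
            congr 1
            rw [Finset.sum_sdiff_eq_sub (Finset.subset_univ _), hp1, Finset.sum_singleton]
    have hg'eq : g' t = p i * (d i - ∑ ℓ, p ℓ * d ℓ) := rfl
    rw [hg'eq, Real.norm_eq_abs, abs_mul, abs_of_nonneg (hp0 i)]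
    calc p i * |d i - ∑ ℓ, p ℓ * d ℓ| ≤ p i * ((1 - p i) * (2 * M)) :=
          mul_le_mul_of_nonneg_left habs (hp0 i)
      _ ≤ (1 / 2) * M := by nlinarith [hp0 i, hpi1, hM0, sq_nonneg (p i - 1/2)]
  have hmvt := norm_image_sub_le_of_norm_deriv_le_segment_01'
    (f := g) (f' := g') (fun t _ => (hderiv t).hasDerivWithinAt) hbound
  have hg1 : g 1 = softmax u i := by simp [hg, hw, hd]
  have hg0 : g 0 = softmax v i := by simp [hg, hw, hd]
  rw [hg1, hg0, Real.norm_eq_abs] at hmvt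
  exact hmvt

/-- Softmax perturbation under low-rank approximation: for logits `z = W·h + b` and
`z̃ = W̃·h + b` with `‖h‖₂ ≤ R`, the softmax outputs satisfy
`‖σ(z̃) - σ(z)‖_∞ ≤ (1/2)·R·‖W - W̃‖₂` (the norm on `Fin C → ℝ` is the sup norm). -/
theorem softmax_perturbation {C D : ℕ} (hC : 0 < C) (hD : 0 < D)
    (W Wt : Matrix (Fin C) (Fin D) ℝ) (b : Fin C → ℝ) (R : ℝ)
    (h : EuclideanSpace ℝ (Fin D)) (hh : ‖h‖ ≤ R) :
    ‖softmax (Wt.mulVec (WithLp.equiv 2 (Fin D → ℝ) h) + b) -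
        softmax (W.mulVec (WithLp.equiv 2 (Fin D → ℝ) h) + b)‖ ≤
      (1 / 2) * R * matrixSpectralNorm (W - Wt) := by
  set h' : Fin D → ℝ := WithLp.equiv 2 (Fin D → ℝ) h with hh'
  set zt : Fin C → ℝ := Wt.mulVec h' + b with hzt
  set z : Fin C → ℝ := W.mulVec h' + b with hz
  have hR0 : 0 ≤ R := le_trans (norm_nonneg _) hh
  have hS0 : 0 ≤ matrixSpectralNorm (W - Wt) := norm_nonneg _
  -- spectral norms of W - Wt and Wt - W agree
  have hspec : matrixSpectralNorm (Wt - W) = matrixSpectralNorm (W - Wt) := by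
    have : Wt - W = -(W - Wt) := by abel
    rw [this]
    unfold matrixSpectralNorm
    rw [map_neg, map_neg, norm_neg]
  -- the Euclidean norm of the logit difference
  have hlogit : ‖(WithLp.equiv 2 (Fin C → ℝ)).symm ((Wt - W).mulVec h')‖ ≤
      matrixSpectralNorm (W - Wt) * R := by
    have h1 : (WithLp.equiv 2 (Fin C → ℝ)).symm ((Wt - W).mulVec h') =
        Matrix.toEuclideanLin (Wt - W) h := by
      rfl
    rw [h1]
    calc ‖Matrix.toEuclideanLin (Wt - W) h‖
        = ‖LinearMap.toContinuousLinearMap (Matrix.toEuclideanLin (Wt - W)) h‖ := rfl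
      _ ≤ matrixSpectralNorm (Wt - W) * ‖h‖ := ContinuousLinearMap.le_opNorm _ _
      _ ≤ matrixSpectralNorm (W - Wt) * R := by
          rw [hspec]; exact mul_le_mul_of_nonneg_left hh hS0
  -- sup-norm of logit difference bounded by Euclidean norm
  have hsup : ‖zt - z‖ ≤ matrixSpectralNorm (W - Wt) * R := by
    have hz' : zt - z = (Wt - W).mulVec h' := by
      rw [hzt, hz, Matrix.sub_mulVec]; abel
    rw [hz']
    refine le_trans ?_ hlogit
    rw [pi_norm_le_iff_of_nonneg (norm_nonneg _)]
    intro i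
    set y := (WithLp.equiv 2 (Fin C → ℝ)).symm ((Wt - W).mulVec h') with hy
    have hyi : y i = (Wt - W).mulVec h' i := rfl
    rw [← hyi, EuclideanSpace.norm_eq,
      show ‖y i‖ = Real.sqrt (‖y i‖ ^ 2) by rw [Real.sqrt_sq (norm_nonneg _)]]
    exact Real.sqrt_le_sqrt
      (Finset.single_le_sum (fun ℓ _ => sq_nonneg ‖y ℓ‖) (Finset.mem_univ i))
  rw [pi_norm_le_iff_of_nonneg (by positivity)]
  intro i
  have := softmax_lipschitz hC zt z i
  rw [Pi.sub_apply, Real.norm_eq_abs]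
  calc |softmax zt i - softmax z i| ≤ (1 / 2) * ‖zt - z‖ := this
    _ ≤ (1 / 2) * (matrixSpectralNorm (W - Wt) * R) := by linarith [hsup]
    _ = (1 / 2) * R * matrixSpectralNorm (W - Wt) := by ring
end

section
/- Let W be a real C×D matrix with singular value decomposition W = Σ_{i=1}^C s_i·u_i·v_i^T, where (u_1,…,u_C) is an orthonormal family in ℝ^C, (v_1,…,v_C) is an orthonormal family in ℝ^D, and s_1 ≥ ⋯ ≥ s_C ≥ 0. Fix k < C and let W_k = Σ_{i=1}^k s_i·u_i·v_i^T. Let b ∈ ℝ^C, and let h ∈ ℝ^D with Euclidean norm ‖h‖₂ ≤ R. Define p = σ(W·h + b) and p̃ = σ(W_k·h + b), where σ is the softmax function. Then ‖p̃ − p‖_∞ ≤ (1/2)·R·s_{k+1}. -/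
/-- Each coordinate of softmax is `1/2`-Lipschitz w.r.t. the sup norm. -/
lemma softmax_coord_lipschitz {C : ℕ} (hC : 0 < C) (x y : Fin C → ℝ) (δ : ℝ)
    (hδ : ∀ j, |x j - y j| ≤ δ) (i : Fin C) :
    |softmax x i - softmax y i| ≤ δ / 2 := by
  haveI : Nonempty (Fin C) := ⟨⟨0, hC⟩⟩
  have hne : (Finset.univ : Finset (Fin C)).Nonempty := Finset.univ_nonempty
  set d : Fin C → ℝ := fun j => x j - y j with hd
  set E : ℝ → Fin C → ℝ := fun t j => Real.exp (y j + t * d j) with hE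
  set S : ℝ → ℝ := fun t => ∑ j, E t j with hSdef
  have hEpos : ∀ t j, 0 < E t j := fun t j => Real.exp_pos _
  have hSpos : ∀ t, 0 < S t := fun t =>
    Finset.sum_pos (fun j _ => hEpos t j) hne
  set g : ℝ → ℝ := fun t => E t i / S t with hg
  have hderiv : ∀ t : ℝ, HasDerivAt g
      (((d i * E t i) * S t - E t i * ∑ j, d j * E t j) / S t ^ 2) t := by
    intro t
    have hEj : ∀ j, HasDerivAt (fun t => E t j) (d j * E t j) t := by
      intro j
      have h1 : HasDerivAt (fun t : ℝ => y j + t * d j) (d j) t := by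
        simpa using ((hasDerivAt_id t).mul_const (d j)).const_add (y j)
      simpa [mul_comm] using h1.exp
    have hS' : HasDerivAt S (∑ j, d j * E t j) t := by
      exact HasDerivAt.fun_sum (fun j _ => hEj j)
    exact (hEj i).div hS' (hSpos t).ne'
  have hδ0 : 0 ≤ δ := le_trans (abs_nonneg _) (hδ ⟨0, hC⟩)
  have hbound : ∀ t : ℝ,
      |((d i * E t i) * S t - E t i * ∑ j, d j * E t j) / S t ^ 2| ≤ δ / 2 := by
    intro t
    have hS := hSpos t
    have hnum : (d i * E t i) * S t - E t i * ∑ j, d j * E t j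
        = E t i * ∑ j, E t j * (d i - d j) := by
      rw [hSdef, Finset.mul_sum, Finset.mul_sum, Finset.mul_sum, ← Finset.sum_sub_distrib]
      exact Finset.sum_congr rfl (fun j _ => by ring)
    rw [hnum, abs_div, abs_of_pos (pow_pos hS 2)]
    rw [div_le_iff₀ (pow_pos hS 2)]
    have h1 : |E t i * ∑ j, E t j * (d i - d j)|
        ≤ E t i * ∑ j ∈ Finset.univ.erase i, E t j * (2 * δ) := by
      rw [abs_mul, abs_of_pos (hEpos t i)]
      gcongr
      calc |∑ j, E t j * (d i - d j)|
          ≤ ∑ j, |E t j * (d i - d j)| := Finset.abs_sum_le_sum_abs _ _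
        _ = ∑ j ∈ Finset.univ.erase i, |E t j * (d i - d j)| := by
            rw [← Finset.sum_erase_add _ _ (Finset.mem_univ i)]
            simp
        _ ≤ ∑ j ∈ Finset.univ.erase i, E t j * (2 * δ) := by
            apply Finset.sum_le_sum
            intro j _
            rw [abs_mul, abs_of_pos (hEpos t j)]
            gcongr
            calc |d i - d j| ≤ |d i| + |d j| := abs_sub _ _
              _ ≤ δ + δ := add_le_add (hδ i) (hδ j)
              _ = 2 * δ := by ring
    refine le_trans h1 ?_
    rw [← Finset.sum_mul]
    have hsum : ∑ j ∈ Finset.univ.erase i, E t j = S t - E t i := by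
      rw [hSdef]
      simp [Finset.sum_erase_eq_sub (Finset.mem_univ i)]
    rw [hsum]
    have hEle : E t i ≤ S t := by
      rw [hSdef]
      exact Finset.single_le_sum (fun j _ => (hEpos t j).le) (Finset.mem_univ i)
    nlinarith [hEpos t i, sq_nonneg (S t - 2 * E t i)]
  have key : ‖g 1 - g 0‖ ≤ (δ / 2) * ‖(1 : ℝ) - 0‖ := by
    exact Convex.norm_image_sub_le_of_norm_hasDerivWithin_le
      (f' := fun t => ((d i * E t i) * S t - E t i * ∑ j, d j * E t j) / S t ^ 2)
      (fun t _ => (hderiv t).hasDerivWithinAt)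
      (fun t _ => by rw [Real.norm_eq_abs]; exact hbound t)
      convex_univ trivial trivial
  have hg1 : g 1 = softmax x i := by
    simp only [hg, hE, hSdef, softmax, hd]
    norm_num
  have hg0 : g 0 = softmax y i := by
    simp only [hg, hE, hSdef, softmax, hd]
    norm_num
  rw [hg1, hg0] at key
  simpa [Real.norm_eq_abs] using key

/-- Coordinatewise bound on the tail of the SVD applied to `h`. -/
lemma svd_tail_coord_bound {C D : ℕ} (hC : 0 < C)
    (s : Fin C → ℝ) (u : Fin C → Fin C → ℝ) (v : Fin C → Fin D → ℝ)
    (hu : ∀ i j : Fin C, dotProduct (u i) (u j) = if i = j then (1 : ℝ) else 0)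
    (hv : ∀ i j : Fin C, dotProduct (v i) (v j) = if i = j then (1 : ℝ) else 0)
    (hs_anti : ∀ i j : Fin C, i ≤ j → s j ≤ s i)
    (hs_nonneg : ∀ i : Fin C, 0 ≤ s i)
    (k : ℕ) (hk : k < C)
    (R : ℝ) (h : EuclideanSpace ℝ (Fin D)) (hh : ‖h‖ ≤ R) (j : Fin C) :
    |∑ i ∈ Finset.univ.filter (fun i : Fin C => ¬ (i : ℕ) < k),
        s i * (u i j * dotProduct (v i) (WithLp.equiv 2 (Fin D → ℝ) h))| ≤
      R * s ⟨k, hk⟩ := by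
  set h' : Fin D → ℝ := WithLp.equiv 2 (Fin D → ℝ) h with hh'
  set c : Fin C → ℝ := fun i => dotProduct (v i) h' with hc
  have hR0 : 0 ≤ R := le_trans (norm_nonneg h) hh
  have hcol : ∑ i, (u i j) ^ 2 = 1 := by
    set U : Matrix (Fin C) (Fin C) ℝ := Matrix.of u with hU
    have h1 : U * U.transpose = 1 := by
      ext a b
      simp [Matrix.mul_apply, Matrix.one_apply, hU, ← hu a b, dotProduct]
    have h2 : U.transpose * U = 1 := mul_eq_one_comm.mp h1
    have := congrFun (congrFun h2 j) j
    simpa [Matrix.mul_apply, Matrix.one_apply, hU, sq] using this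
  have hbessel : ∑ i, (c i) ^ 2 ≤ R ^ 2 := by
    set v' : Fin C → EuclideanSpace ℝ (Fin D) :=
      fun i => (WithLp.equiv 2 (Fin D → ℝ)).symm (v i) with hv'
    have hon : Orthonormal ℝ v' := by
      rw [orthonormal_iff_ite]
      intro i j
      simpa [v', PiLp.inner_apply, RCLike.inner_apply, dotProduct,
        mul_comm] using hv i j
    have := hon.sum_inner_products_le h (s := Finset.univ)
    have hinner : ∀ i, (inner ℝ (v' i) h : ℝ) = c i := by
      intro i
      simp [v', hc, PiLp.inner_apply, RCLike.inner_apply, dotProduct, hh', mul_comm]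
    have e1 : ∑ i, ‖(inner ℝ (v' i) h : ℝ)‖ ^ 2 = ∑ i, (c i) ^ 2 := by
      apply Finset.sum_congr rfl; intro i _
      rw [hinner i, Real.norm_eq_abs, sq_abs]
    calc ∑ i, (c i) ^ 2 = ∑ i, ‖(inner ℝ (v' i) h : ℝ)‖ ^ 2 := e1.symm
      _ ≤ ‖h‖ ^ 2 := this
      _ ≤ R ^ 2 := by nlinarith [norm_nonneg h]
  set T := Finset.univ.filter (fun i : Fin C => ¬ (i : ℕ) < k) with hT
  have hsk : ∀ i ∈ T, s i ≤ s ⟨k, hk⟩ := by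
    intro i hi
    simp only [hT, Finset.mem_filter, not_lt] at hi
    exact hs_anti ⟨k, hk⟩ i hi.2
  calc |∑ i ∈ T, s i * (u i j * c i)|
      ≤ ∑ i ∈ T, |s i * (u i j * c i)| := Finset.abs_sum_le_sum_abs _ _
    _ = ∑ i ∈ T, s i * (|u i j| * |c i|) := by
        apply Finset.sum_congr rfl; intro i _
        rw [abs_mul, abs_mul, abs_of_nonneg (hs_nonneg i)]
    _ ≤ ∑ i ∈ T, s ⟨k, hk⟩ * (|u i j| * |c i|) := by
        apply Finset.sum_le_sum; intro i hi
        exact mul_le_mul_of_nonneg_right (hsk i hi)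
          (mul_nonneg (abs_nonneg _) (abs_nonneg _))
    _ = s ⟨k, hk⟩ * ∑ i ∈ T, |u i j| * |c i| := by rw [Finset.mul_sum]
    _ ≤ s ⟨k, hk⟩ * R := by
        apply mul_le_mul_of_nonneg_left _ (hs_nonneg _)
        have hCS : (∑ i ∈ T, |u i j| * |c i|) ^ 2
            ≤ (∑ i ∈ T, |u i j| ^ 2) * ∑ i ∈ T, |c i| ^ 2 :=
          Finset.sum_mul_sq_le_sq_mul_sq T _ _
        have h1 : ∑ i ∈ T, |u i j| ^ 2 ≤ 1 := by
          rw [← hcol]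
          calc ∑ i ∈ T, |u i j| ^ 2 = ∑ i ∈ T, (u i j) ^ 2 := by simp [sq_abs]
            _ ≤ ∑ i, (u i j) ^ 2 := Finset.sum_le_sum_of_subset_of_nonneg
                (Finset.subset_univ T) (fun i _ _ => sq_nonneg _)
        have h2 : ∑ i ∈ T, |c i| ^ 2 ≤ R ^ 2 := by
          calc ∑ i ∈ T, |c i| ^ 2 = ∑ i ∈ T, (c i) ^ 2 := by simp [sq_abs]
            _ ≤ ∑ i, (c i) ^ 2 := Finset.sum_le_sum_of_subset_of_nonneg
                (Finset.subset_univ T) (fun i _ _ => sq_nonneg _)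
            _ ≤ R ^ 2 := hbessel
        have hX0 : 0 ≤ ∑ i ∈ T, |u i j| * |c i| :=
          Finset.sum_nonneg (fun i _ => mul_nonneg (abs_nonneg _) (abs_nonneg _))
        have hc0 : 0 ≤ ∑ i ∈ T, |c i| ^ 2 :=
          Finset.sum_nonneg (fun i _ => sq_nonneg _)
        have hsq : (∑ i ∈ T, |u i j| * |c i|) ^ 2 ≤ R ^ 2 := by nlinarith
        exact le_of_pow_le_pow_left₀ two_ne_zero hR0 hsq
    _ = R * s ⟨k, hk⟩ := mul_comm _ _

/-- If `W = ∑_{i=1}^C s_i u_i v_i^T` is a singular value decomposition (orthonormal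
families `u`, `v`, nonincreasing nonnegative `s`) and `W_k = ∑_{i=1}^k s_i u_i v_i^T`
is its rank-`k` truncation, then for any bias `b` and feature vector `h` with
Euclidean norm `‖h‖₂ ≤ R`, the softmax outputs `p = σ(W h + b)` and
`p̃ = σ(W_k h + b)` satisfy `‖p̃ - p‖_∞ ≤ (1/2)·R·s_{k+1}`
(the norm on `Fin C → ℝ` is the sup norm). -/
theorem softmax_perturbation_svd_truncation {C D : ℕ} (hC : 0 < C) (hD : 0 < D)
    (W : Matrix (Fin C) (Fin D) ℝ)
    (s : Fin C → ℝ) (u : Fin C → Fin C → ℝ) (v : Fin C → Fin D → ℝ)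
    (hu : ∀ i j : Fin C, dotProduct (u i) (u j) = if i = j then (1 : ℝ) else 0)
    (hv : ∀ i j : Fin C, dotProduct (v i) (v j) = if i = j then (1 : ℝ) else 0)
    (hs_anti : ∀ i j : Fin C, i ≤ j → s j ≤ s i)
    (hs_nonneg : ∀ i : Fin C, 0 ≤ s i)
    (hW : W = ∑ i : Fin C, s i • Matrix.vecMulVec (u i) (v i))
    (k : ℕ) (hk : k < C)
    (b : Fin C → ℝ) (R : ℝ) (h : EuclideanSpace ℝ (Fin D)) (hh : ‖h‖ ≤ R) :
    ‖softmax
          ((∑ i ∈ Finset.univ.filter (fun i : Fin C => (i : ℕ) < k),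
              s i • Matrix.vecMulVec (u i) (v i)).mulVec
            (WithLp.equiv 2 (Fin D → ℝ) h) + b) -
        softmax (W.mulVec (WithLp.equiv 2 (Fin D → ℝ) h) + b)‖ ≤
      (1 / 2) * R * s ⟨k, hk⟩ := by
  set h' : Fin D → ℝ := WithLp.equiv 2 (Fin D → ℝ) h with hh'
  have hR0 : 0 ≤ R := le_trans (norm_nonneg h) hh
  set Wk : Matrix (Fin C) (Fin D) ℝ :=
    ∑ i ∈ Finset.univ.filter (fun i : Fin C => (i : ℕ) < k),
      s i • Matrix.vecMulVec (u i) (v i) with hWk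
  set x : Fin C → ℝ := Wk.mulVec h' + b with hx
  set y : Fin C → ℝ := W.mulVec h' + b with hy
  have hcoord : ∀ j : Fin C, |x j - y j| ≤ R * s ⟨k, hk⟩ := by
    intro j
    have hsplit : W = Wk + ∑ i ∈ Finset.univ.filter (fun i : Fin C => ¬ (i : ℕ) < k),
        s i • Matrix.vecMulVec (u i) (v i) := by
      rw [hW, hWk, Finset.sum_filter_add_sum_filter_not]
    have hxy : x j - y j = -((∑ i ∈ Finset.univ.filter (fun i : Fin C => ¬ (i : ℕ) < k),
        s i • Matrix.vecMulVec (u i) (v i)).mulVec h' j) := by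
      rw [hx, hy, hsplit, Matrix.add_mulVec]
      simp [Pi.add_apply]
    have hentry : (∑ i ∈ Finset.univ.filter (fun i : Fin C => ¬ (i : ℕ) < k),
        s i • Matrix.vecMulVec (u i) (v i)).mulVec h' j
        = ∑ i ∈ Finset.univ.filter (fun i : Fin C => ¬ (i : ℕ) < k),
            s i * (u i j * dotProduct (v i) h') := by
      simp only [Matrix.sum_apply, Matrix.mulVec, dotProduct, Finset.sum_apply,
        Matrix.smul_apply, Matrix.vecMulVec_apply, smul_eq_mul, Finset.sum_mul]
      rw [Finset.sum_comm]
      apply Finset.sum_congr rfl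
      intro i _
      simp only [Finset.mul_sum]
      apply Finset.sum_congr rfl
      intro l _
      ring
    rw [hxy, abs_neg, hentry]
    exact svd_tail_coord_bound hC s u v hu hv hs_anti hs_nonneg k hk R h hh j
  have hnonneg : 0 ≤ (1 / 2) * R * s ⟨k, hk⟩ :=
    mul_nonneg (mul_nonneg (by norm_num) hR0) (hs_nonneg _)
  rw [pi_norm_le_iff_of_nonneg hnonneg]
  intro i
  have := softmax_coord_lipschitz hC x y (R * s ⟨k, hk⟩) hcoord i
  calc ‖(softmax x - softmax y) i‖ = |softmax x i - softmax y i| := by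
        simp [Real.norm_eq_abs]
    _ ≤ (R * s ⟨k, hk⟩) / 2 := this
    _ = (1 / 2) * R * s ⟨k, hk⟩ := by ring
end
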